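/- Let A be a bounded linear operator on a complex Hilbert space H, and let f, g be nonnegative continuous functions on [0,∞) satisfying f(t)g(t) = t for all t ≥ 0. Then w(A) ≤ (1/2) · w( f(|A|)² + g(|A*|)² ). -/

import Mathlib

variable {H : Type*} [NormedAddCommGroup H] [InnerProductSpace ℂ H] [CompleteSpace H]

/-- The numerical radius `w(T) = sup { |⟨Tx, x⟩| : ‖x‖ = 1 }`. -/
noncomputable def numRad (T : H →L[ℂ] H) : ℝ :=
  ⨆ x : {x : H // ‖x‖ = 1}, ‖(inner ℂ (T x) x : ℂ)‖

/-- The spectral radius `r(T)` as a real number. -/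
noncomputable def specRad (T : H →L[ℂ] H) : ℝ :=
  (spectralRadius ℂ T).toReal

/-- `ℓ(T) = inf { ‖Tx‖ : ‖x‖ = 1 }`. -/
noncomputable def lowB (T : H →L[ℂ] H) : ℝ :=
  ⨅ x : {x : H // ‖x‖ = 1}, ‖T x‖

/-- The absolute value `|T| = (T*T)^(1/2)`. -/
noncomputable def oAbs (T : H →L[ℂ] H) : H →L[ℂ] H :=
  cfc Real.sqrt (ContinuousLinearMap.adjoint T * T)

/-- Real powers of a (positive) operator via the continuous functional calculus. -/
noncomputable def oPow (T : H →L[ℂ] H) (r : ℝ) : H →L[ℂ] H :=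
  cfc (fun t : ℝ => t ^ r) T
open ContinuousLinearMap

theorem my_inner_sq {Q : H →L[ℂ] H} (hQ : IsSelfAdjoint Q) (x : H) :
    (inner ℂ ((Q * Q) x) x : ℂ) = inner ℂ (Q x) (Q x) := by
  calc (inner ℂ ((Q * Q) x) x : ℂ) = inner ℂ (adjoint Q (Q x)) x := by rw [hQ.adjoint_eq]; rfl
    _ = inner ℂ (Q x) (Q x) := adjoint_inner_left Q x (Q x)

theorem my_B₀_sa (A : H →L[ℂ] H) : IsSelfAdjoint (adjoint A * A) := by
  rw [← star_eq_adjoint]; exact IsSelfAdjoint.star_mul_self A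

theorem my_B₀_nonneg (A : H →L[ℂ] H) : (0 : H →L[ℂ] H) ≤ adjoint A * A := by
  rw [← star_eq_adjoint]; exact star_mul_self_nonneg A

theorem my_B₀_spec (A : H →L[ℂ] H) : spectrum ℝ (adjoint A * A) ⊆ Set.Ici 0 :=
  fun _ hx => spectrum_nonneg_of_nonneg (my_B₀_nonneg A) hx

theorem my_oAbs_sa (A : H →L[ℂ] H) : IsSelfAdjoint (oAbs A) := cfc_predicate _ _

theorem my_oAbs_nonneg (A : H →L[ℂ] H) : (0 : H →L[ℂ] H) ≤ oAbs A :=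
  cfc_nonneg fun x _ => Real.sqrt_nonneg x

theorem my_oAbs_spec (A : H →L[ℂ] H) : spectrum ℝ (oAbs A) ⊆ Set.Ici 0 :=
  fun _ hx => spectrum_nonneg_of_nonneg (my_oAbs_nonneg A) hx

theorem my_oAbs_sq (A : H →L[ℂ] H) : oAbs A * oAbs A = adjoint A * A := by
  rw [oAbs, ← cfc_mul _ _ _ (Real.continuous_sqrt.continuousOn) (Real.continuous_sqrt.continuousOn)]
  calc cfc (fun t => Real.sqrt t * Real.sqrt t) (adjoint A * A)
      = cfc (fun t : ℝ => t) (adjoint A * A) :=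
        cfc_congr fun t ht => Real.mul_self_sqrt (my_B₀_spec A ht)
    _ = adjoint A * A := cfc_id ℝ _ (my_B₀_sa A)

theorem my_oAbs_norm_apply (A : H →L[ℂ] H) (x : H) : ‖oAbs A x‖ = ‖A x‖ := by
  have h1 : (inner ℂ ((oAbs A * oAbs A) x) x : ℂ) = inner ℂ (oAbs A x) (oAbs A x) :=
    my_inner_sq (my_oAbs_sa A) x
  have h2 : (inner ℂ ((adjoint A * A) x) x : ℂ) = inner ℂ (A x) (A x) := by
    calc (inner ℂ ((adjoint A * A) x) x : ℂ) = inner ℂ (adjoint A (A x)) x := rfl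
      _ = inner ℂ (A x) (A x) := adjoint_inner_left A x (A x)
  rw [my_oAbs_sq A, h2] at h1
  rw [inner_self_eq_norm_sq_to_K, inner_self_eq_norm_sq_to_K] at h1
  have h4 : (‖A x‖ : ℝ)^2 = (‖oAbs A x‖ : ℝ)^2 := by exact_mod_cast h1
  nlinarith [norm_nonneg (A x), norm_nonneg (oAbs A x)]

theorem my_cfc_oAbs_eq (A : H →L[ℂ] H) (k : ℝ → ℝ) (hk : ContinuousOn k (Set.Ici 0)) :
    cfc k (oAbs A) = cfc (fun t => k (Real.sqrt t)) (adjoint A * A) := by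
  rw [oAbs, ← cfc_comp' k Real.sqrt (adjoint A * A)
    (hk.mono (by rintro y ⟨t, -, rfl⟩; exact Real.sqrt_nonneg t))
    Real.continuous_sqrt.continuousOn (my_B₀_sa A)]

open ContinuousLinearMap in
theorem my_aux_pow {H : Type*} [NormedAddCommGroup H] [InnerProductSpace ℂ H] [CompleteSpace H]
    (A : H →L[ℂ] H) (n : ℕ) :
    A * (adjoint A * A) ^ n = (A * adjoint A) ^ n * A := by
  induction n with
  | zero => simp
  | succ n ih =>
    rw [pow_succ, ← mul_assoc, ih, pow_succ]
    simp only [mul_assoc]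

open ContinuousLinearMap in
theorem my_aux_poly {H : Type*} [NormedAddCommGroup H] [InnerProductSpace ℂ H] [CompleteSpace H]
    (A : H →L[ℂ] H) (q : Polynomial ℝ) :
    A * Polynomial.aeval (adjoint A * A) q = Polynomial.aeval (A * adjoint A) q * A := by
  induction q using Polynomial.induction_on' with
  | add p q hp hq => simp [mul_add, add_mul, hp, hq]
  | monomial n r =>
    simp only [Polynomial.aeval_monomial]
    rw [← mul_assoc, ← Algebra.commutes r A, mul_assoc, my_aux_pow, mul_assoc]

open ContinuousLinearMap in
theorem my_cfc_intertwine {H : Type*} [NormedAddCommGroup H] [InnerProductSpace ℂ H]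
    [CompleteSpace H] (A : H →L[ℂ] H) (k : ℝ → ℝ) (hk : ContinuousOn k (Set.Ici 0)) :
    A * cfc k (adjoint A * A) = cfc k (A * adjoint A) * A := by
  rcases subsingleton_or_nontrivial H with hH | hH
  · have : Subsingleton (H →L[ℂ] H) := ⟨fun a b => by ext x; exact Subsingleton.elim _ _⟩
    exact Subsingleton.elim _ _
  set B₀ := adjoint A * A with hB₀
  set C₀ := A * adjoint A with hC₀
  have hB₀sa : IsSelfAdjoint B₀ := by
    rw [hB₀, ← star_eq_adjoint]; exact IsSelfAdjoint.star_mul_self A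
  have hC₀sa : IsSelfAdjoint C₀ := by
    rw [hC₀, ← star_eq_adjoint (A := A)]; exact IsSelfAdjoint.mul_star_self A
  have hB₀pos : (0 : H →L[ℂ] H) ≤ B₀ := by
    rw [hB₀, ← star_eq_adjoint]; exact star_mul_self_nonneg A
  have hC₀pos : (0 : H →L[ℂ] H) ≤ C₀ := by
    rw [hC₀, ← star_eq_adjoint (A := A)]; exact mul_star_self_nonneg A
  set M : ℝ := max ‖B₀‖ ‖C₀‖ with hM
  have hspecB : spectrum ℝ B₀ ⊆ Set.Icc 0 M := by
    intro x hx
    refine ⟨spectrum_nonneg_of_nonneg hB₀pos hx, ?_⟩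
    have := spectrum.subset_closedBall_norm (𝕜 := ℝ) B₀ hx
    rw [Metric.mem_closedBall, Real.dist_eq, sub_zero] at this
    exact (le_abs_self x).trans (this.trans (le_max_left _ _))
  have hspecC : spectrum ℝ C₀ ⊆ Set.Icc 0 M := by
    intro x hx
    refine ⟨spectrum_nonneg_of_nonneg hC₀pos hx, ?_⟩
    have := spectrum.subset_closedBall_norm (𝕜 := ℝ) C₀ hx
    rw [Metric.mem_closedBall, Real.dist_eq, sub_zero] at this
    exact (le_abs_self x).trans (this.trans (le_max_right _ _))
  have hIcc : Set.Icc (0:ℝ) M ⊆ Set.Ici 0 := fun x hx => hx.1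
  have hkB : ContinuousOn k (spectrum ℝ B₀) := hk.mono (hspecB.trans hIcc)
  have hkC : ContinuousOn k (spectrum ℝ C₀) := hk.mono (hspecC.trans hIcc)
  rw [← sub_eq_zero, ← norm_le_zero_iff]
  refine le_of_forall_pos_le_add fun ε hε => ?_
  obtain ⟨q, hq⟩ := exists_polynomial_near_of_continuousOn 0 M k
    (hk.mono (Set.Icc_subset_Ici_iff (le_max_of_le_left (norm_nonneg _)) |>.mpr le_rfl))
    (ε / (2 * ‖A‖ + 1)) (by positivity)
  have hδ : (0:ℝ) < ε / (2 * ‖A‖ + 1) := by positivity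
  set δ := ε / (2 * ‖A‖ + 1) with hδdef
  have e1 : ‖cfc k B₀ - cfc q.eval B₀‖ ≤ δ := by
    rw [← cfc_sub k q.eval B₀ hkB q.continuousOn]
    refine norm_cfc_le hδ.le fun x hx => ?_
    rw [Real.norm_eq_abs, abs_sub_comm]
    exact (hq x (hspecB hx)).le
  have e2 : ‖cfc k C₀ - cfc q.eval C₀‖ ≤ δ := by
    rw [← cfc_sub k q.eval C₀ hkC q.continuousOn]
    refine norm_cfc_le hδ.le fun x hx => ?_
    rw [Real.norm_eq_abs, abs_sub_comm]
    exact (hq x (hspecC hx)).le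
  have hpoly : A * cfc q.eval B₀ = cfc q.eval C₀ * A := by
    rw [cfc_polynomial q B₀ hB₀sa, cfc_polynomial q C₀ hC₀sa]
    exact my_aux_poly A q
  have key : A * cfc k B₀ - cfc k C₀ * A =
      A * (cfc k B₀ - cfc q.eval B₀) + (cfc q.eval C₀ - cfc k C₀) * A := by
    rw [mul_sub, sub_mul, hpoly]; abel
  calc ‖A * cfc k B₀ - cfc k C₀ * A‖
      ≤ ‖A * (cfc k B₀ - cfc q.eval B₀)‖ + ‖(cfc q.eval C₀ - cfc k C₀) * A‖ := by
        rw [key]; exact norm_add_le _ _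
    _ ≤ ‖A‖ * δ + δ * ‖A‖ := by
        gcongr
        · exact (norm_mul_le _ _).trans (by gcongr)
        · refine (norm_mul_le _ _).trans ?_
          gcongr
          rw [norm_sub_rev]; exact e2
    _ ≤ 0 + ε := by
        rw [zero_add]
        have h2 : δ * (2 * ‖A‖ + 1) = ε := div_mul_cancel₀ _ (by positivity)
        nlinarith [hδ.le]

theorem my_intertwine_abs (A : H →L[ℂ] H) (k : ℝ → ℝ) (hk : ContinuousOn k (Set.Ici 0)) :
    A * cfc k (oAbs A) = cfc k (oAbs (adjoint A)) * A := by
  have hks : ContinuousOn (fun t => k (Real.sqrt t)) (Set.Ici 0) :=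
    hk.comp Real.continuous_sqrt.continuousOn fun t _ => Real.sqrt_nonneg t
  have h2 := my_cfc_oAbs_eq (adjoint A) k hk
  rw [adjoint_adjoint] at h2
  rw [my_cfc_oAbs_eq A k hk, h2, my_cfc_intertwine A _ hks]

set_option maxHeartbeats 1000000 in
theorem my_key (A : H →L[ℂ] H) (f g : ℝ → ℝ)
    (hf_cont : ContinuousOn f (Set.Ici 0)) (hg_cont : ContinuousOn g (Set.Ici 0))
    (hf_nonneg : ∀ t : ℝ, 0 ≤ t → 0 ≤ f t) (hg_nonneg : ∀ t : ℝ, 0 ≤ t → 0 ≤ g t)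
    (hfg : ∀ t : ℝ, 0 ≤ t → f t * g t = t) (x : H) :
    ‖(inner ℂ (A x) x : ℂ)‖ ≤ ‖cfc f (oAbs A) x‖ * ‖cfc g (oAbs (adjoint A)) x‖ := by
  set S := oAbs A with hSdef
  set T := oAbs (adjoint A) with hTdef
  have hSsa : IsSelfAdjoint S := my_oAbs_sa A
  have hTsa : IsSelfAdjoint T := my_oAbs_sa (adjoint A)
  have hSspec : spectrum ℝ S ⊆ Set.Ici 0 := my_oAbs_spec A
  have hTspec : spectrum ℝ T ⊆ Set.Ici 0 := my_oAbs_spec (adjoint A)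
  suffices claim : ∀ ε : ℝ, 0 < ε →
      ‖(inner ℂ (A x) x : ℂ)‖ ≤ ‖cfc f S x + ε • x‖ * ‖cfc g T x + ε • x‖ by
    have hcont : Continuous fun ε : ℝ => ‖cfc f S x + ε • x‖ * ‖cfc g T x + ε • x‖ := by
      fun_prop
    have h0 : Filter.Tendsto (fun ε : ℝ => ‖cfc f S x + ε • x‖ * ‖cfc g T x + ε • x‖)
        (nhdsWithin 0 (Set.Ioi 0)) (nhds (‖cfc f S x‖ * ‖cfc g T x‖)) := by
      have h0' : Filter.Tendsto (fun ε : ℝ => ‖cfc f S x + ε • x‖ * ‖cfc g T x + ε • x‖)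
          (nhdsWithin 0 (Set.Ioi 0)) (nhds (‖cfc f S x + (0:ℝ) • x‖ * ‖cfc g T x + (0:ℝ) • x‖)) :=
        (hcont.tendsto 0).mono_left nhdsWithin_le_nhds
      simpa using h0'
    exact ge_of_tendsto h0 (eventually_nhdsWithin_of_forall claim)
  intro ε hε
  have hgε : ContinuousOn (fun t => g t + ε) (Set.Ici 0) := hg_cont.add continuousOn_const
  have hpos : ∀ t : ℝ, t ∈ Set.Ici (0:ℝ) → 0 < g t + ε := fun t ht =>
    add_pos_of_nonneg_of_pos (hg_nonneg t ht) hε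
  have hkε : ContinuousOn (fun t => (g t + ε)⁻¹) (Set.Ici 0) :=
    hgε.inv₀ fun t ht => (hpos t ht).ne'
  set Kε := cfc (fun t => (g t + ε)⁻¹) S with hKdef
  set Sε := cfc (fun t => g t + ε) T with hSedef
  have h1 : A * Kε = cfc (fun t => (g t + ε)⁻¹) T * A := my_intertwine_abs A _ hkε
  have h2 : Sε * cfc (fun t => (g t + ε)⁻¹) T = 1 := by
    rw [hSedef, ← cfc_mul _ _ T (hgε.mono hTspec) (hkε.mono hTspec)]
    calc cfc (fun t => (g t + ε) * (g t + ε)⁻¹) T = cfc (fun _ : ℝ => (1:ℝ)) T :=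
          cfc_congr fun t ht => mul_inv_cancel₀ (hpos t (hTspec ht)).ne'
      _ = 1 := by rw [cfc_const 1 T hTsa, map_one]
  have hv : Sε (A (Kε x)) = A x := by
    have h3 : Sε * (A * Kε) = A := by rw [h1, ← mul_assoc, h2, one_mul]
    calc Sε (A (Kε x)) = (Sε * (A * Kε)) x := rfl
      _ = A x := by rw [h3]
  have hSεsa : IsSelfAdjoint Sε := cfc_predicate _ _
  have step1 : (inner ℂ (A x) x : ℂ) = inner ℂ (A (Kε x)) (Sε x) := by
    have h4 := adjoint_inner_left Sε x (A (Kε x))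
    rw [hSεsa.adjoint_eq] at h4
    rw [← hv, h4]
  have hεf : ContinuousOn (fun t : ℝ => t * (g t + ε)⁻¹) (Set.Ici 0) := continuousOn_id.mul hkε
  have step2 : S (Kε x) = cfc (fun t => t * (g t + ε)⁻¹) S x := by
    have h5 : S * Kε = cfc (fun t => t * (g t + ε)⁻¹) S := by
      conv_lhs => rw [← cfc_id ℝ S hSsa]
      rw [hKdef, ← cfc_mul _ _ S continuousOn_id (hkε.mono hSspec)]
      exact rfl
    calc S (Kε x) = (S * Kε) x := rfl
      _ = _ := by rw [h5]
  have hfε : ContinuousOn (fun t => f t + ε) (Set.Ici 0) := hf_cont.add continuousOn_const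
  have step3 : ‖cfc (fun t : ℝ => t * (g t + ε)⁻¹) S x‖ ≤ ‖cfc (fun t => f t + ε) S x‖ := by
    set Q := cfc (fun t : ℝ => t * (g t + ε)⁻¹) S with hQdef
    set P := cfc (fun t => f t + ε) S with hPdef
    have hQsa : IsSelfAdjoint Q := cfc_predicate _ _
    have hPsa : IsSelfAdjoint P := cfc_predicate _ _
    have hsq : Q * Q ≤ P * P := by
      rw [hQdef, hPdef, ← cfc_mul _ _ S (hεf.mono hSspec) (hεf.mono hSspec),
        ← cfc_mul _ _ S (hfε.mono hSspec) (hfε.mono hSspec)]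
      refine cfc_mono (fun t ht => ?_) ((hεf.mono hSspec).mul (hεf.mono hSspec))
        ((hfε.mono hSspec).mul (hfε.mono hSspec))
      have h0 : (0:ℝ) ≤ t := hSspec ht
      have hgt : 0 < g t + ε := hpos t h0
      have h5 : t * (g t + ε)⁻¹ ≤ f t + ε := by
        rw [← div_eq_mul_inv, div_le_iff₀ hgt]
        nlinarith [hf_nonneg t h0, hg_nonneg t h0, hfg t h0, hε.le]
      have h6 : 0 ≤ t * (g t + ε)⁻¹ := mul_nonneg h0 (inv_nonneg.2 hgt.le)
      nlinarith
    have h7 : 0 ≤ RCLike.re (inner ℂ ((P * P - Q * Q) x) x : ℂ) :=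
      (RCLike.nonneg_iff.mp (((nonneg_iff_isPositive _).mp (sub_nonneg.2 hsq)).inner_nonneg_left x)).1
    have h8 : ‖Q x‖^2 ≤ ‖P x‖^2 := by
      have hq := my_inner_sq hQsa x
      have hp := my_inner_sq hPsa x
      rw [inner_self_eq_norm_sq_to_K] at hq hp
      rw [sub_apply, inner_sub_left, map_sub, hq, hp] at h7
      simpa [← Complex.ofReal_pow] using h7
    exact le_of_pow_le_pow_left₀ two_ne_zero (norm_nonneg _) h8
  have hPdec : cfc (fun t => f t + ε) S x = cfc f S x + ε • x := by
    rw [cfc_add (a := S) f (fun _ => ε) (hf_cont.mono hSspec) continuousOn_const,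
      cfc_const ε S hSsa, Algebra.algebraMap_eq_smul_one]
    simp
  have hSedec : Sε x = cfc g T x + ε • x := by
    rw [hSedef, cfc_add (a := T) g (fun _ => ε) (hg_cont.mono hTspec) continuousOn_const,
      cfc_const ε T hTsa, Algebra.algebraMap_eq_smul_one]
    simp
  have hA : ‖A (Kε x)‖ ≤ ‖cfc f S x + ε • x‖ := by
    rw [← my_oAbs_norm_apply A (Kε x), ← hSdef, step2, ← hPdec]
    exact step3
  calc ‖(inner ℂ (A x) x : ℂ)‖ = ‖(inner ℂ (A (Kε x)) (Sε x) : ℂ)‖ := by rw [step1]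
    _ ≤ ‖A (Kε x)‖ * ‖Sε x‖ := norm_inner_le_norm _ _
    _ ≤ ‖cfc f S x + ε • x‖ * ‖cfc g T x + ε • x‖ := by
        rw [hSedec]
        exact mul_le_mul_of_nonneg_right hA (norm_nonneg _)

theorem my_numRad_bdd (T : H →L[ℂ] H) :
    BddAbove (Set.range fun x : {x : H // ‖x‖ = 1} => ‖(inner ℂ (T x) x : ℂ)‖) := by
  refine ⟨‖T‖, ?_⟩
  rintro _ ⟨x, rfl⟩
  calc ‖(inner ℂ (T (x:H)) (x:H) : ℂ)‖ ≤ ‖T (x:H)‖ * ‖(x:H)‖ := norm_inner_le_norm _ _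
    _ ≤ (‖T‖ * ‖(x:H)‖) * ‖(x:H)‖ := by gcongr; exact T.le_opNorm x
    _ = ‖T‖ := by rw [x.2]; ring

theorem numRad_le_half_numRad_sq_add_sq
    (A : H →L[ℂ] H) (f g : ℝ → ℝ)
    (hf_cont : ContinuousOn f (Set.Ici 0)) (hg_cont : ContinuousOn g (Set.Ici 0))
    (hf_nonneg : ∀ t : ℝ, 0 ≤ t → 0 ≤ f t) (hg_nonneg : ∀ t : ℝ, 0 ≤ t → 0 ≤ g t)
    (hfg : ∀ t : ℝ, 0 ≤ t → f t * g t = t) :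
    numRad A ≤ (1 / 2) *
      numRad ((cfc f (oAbs A)) ^ 2 + (cfc g (oAbs (ContinuousLinearMap.adjoint A))) ^ 2) := by
  set F := cfc f (oAbs A) with hF
  set G := cfc g (oAbs (adjoint A)) with hG
  set B := F ^ 2 + G ^ 2 with hB
  rcases isEmpty_or_nonempty {x : H // ‖x‖ = 1} with hI | hI
  · rw [numRad, numRad, iSup_of_empty', iSup_of_empty', Real.sSup_empty]
    norm_num
  · rw [numRad]
    refine ciSup_le fun x => ?_
    have hFsa : IsSelfAdjoint F := cfc_predicate _ _
    have hGsa : IsSelfAdjoint G := cfc_predicate _ _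
    have hkey := my_key A f g hf_cont hg_cont hf_nonneg hg_nonneg hfg (x : H)
    have hBx : (inner ℂ (B (x:H)) (x:H) : ℂ) = ((‖F (x:H)‖^2 + ‖G (x:H)‖^2 : ℝ) : ℂ) := by
      rw [hB, add_apply, inner_add_left, sq, sq,
        my_inner_sq hFsa, my_inner_sq hGsa,
        inner_self_eq_norm_sq_to_K, inner_self_eq_norm_sq_to_K]
      push_cast
      norm_cast
    have hBnorm : ‖(inner ℂ (B (x:H)) (x:H) : ℂ)‖ = ‖F (x:H)‖^2 + ‖G (x:H)‖^2 := by
      rw [hBx, Complex.norm_real, Real.norm_eq_abs]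
      exact abs_of_nonneg (by positivity)
    have hle : ‖(inner ℂ (B (x:H)) (x:H) : ℂ)‖ ≤ numRad B := le_ciSup (my_numRad_bdd B) x
    calc ‖(inner ℂ (A (x:H)) (x:H) : ℂ)‖ ≤ ‖F (x:H)‖ * ‖G (x:H)‖ := hkey
      _ ≤ (1/2) * (‖F (x:H)‖^2 + ‖G (x:H)‖^2) := by
          nlinarith [sq_nonneg (‖F (x:H)‖ - ‖G (x:H)‖)]
      _ = (1/2) * ‖(inner ℂ (B (x:H)) (x:H) : ℂ)‖ := by rw [hBnorm]
      _ ≤ (1/2) * numRad B := by linarith
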